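/- If Q = α₁C₁ + α₂C₂ is a proper quasi-copula (not a copula) written as a linear combination of copulas C₁, C₂ with α₁ + α₂ = 1, then exactly one of α₁, α₂ is negative. Moreover, assuming α₂ < 0, for any copula C₃ and any α₃ > 0 there exist copulas C₁', C₂' and coefficients α₁' = α₁ + α₃, α₂' = α₂ − α₃ such that Q = α₁'C₁' + α₂'C₂' and |α₁'| + |α₂'| > |α₁| + |α₂|. -/

import Mathlib

open Set

/-- A bivariate copula (conditions imposed on the unit square). -/
def IsCopula (C : ℝ → ℝ → ℝ) : Prop :=
  (∀ x ∈ Icc (0:ℝ) 1, C x 0 = 0 ∧ C 0 x = 0 ∧ C x 1 = x ∧ C 1 x = x) ∧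
  (∀ x₁ ∈ Icc (0:ℝ) 1, ∀ x₂ ∈ Icc (0:ℝ) 1, ∀ y₁ ∈ Icc (0:ℝ) 1, ∀ y₂ ∈ Icc (0:ℝ) 1,
    x₁ ≤ x₂ → y₁ ≤ y₂ → 0 ≤ C x₂ y₂ - C x₁ y₂ - C x₂ y₁ + C x₁ y₁)

/-- A bivariate quasi-copula (conditions imposed on the unit square). -/
def IsQuasiCopula (Q : ℝ → ℝ → ℝ) : Prop :=
  (∀ x ∈ Icc (0:ℝ) 1, Q x 0 = 0 ∧ Q 0 x = 0 ∧ Q x 1 = x ∧ Q 1 x = x) ∧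
  (∀ x₁ ∈ Icc (0:ℝ) 1, ∀ x₂ ∈ Icc (0:ℝ) 1, ∀ y ∈ Icc (0:ℝ) 1,
    x₁ ≤ x₂ → Q x₁ y ≤ Q x₂ y) ∧
  (∀ x ∈ Icc (0:ℝ) 1, ∀ y₁ ∈ Icc (0:ℝ) 1, ∀ y₂ ∈ Icc (0:ℝ) 1,
    y₁ ≤ y₂ → Q x y₁ ≤ Q x y₂) ∧
  (∀ x₁ ∈ Icc (0:ℝ) 1, ∀ x₂ ∈ Icc (0:ℝ) 1, ∀ y₁ ∈ Icc (0:ℝ) 1, ∀ y₂ ∈ Icc (0:ℝ) 1,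
    |Q x₂ y₂ - Q x₁ y₁| ≤ |x₂ - x₁| + |y₂ - y₁|)

/-- Q-volume of the dyadic rectangle R_{ij}^n = [i/2^n,(i+1)/2^n] × [j/2^n,(j+1)/2^n]
(indices shifted by one with respect to the paper). -/
noncomputable def dyadVol (Q : ℝ → ℝ → ℝ) (n : ℕ) (i j : Fin (2^n)) : ℝ :=
  Q (((i : ℕ) + 1) / 2^n) (((j : ℕ) + 1) / 2^n)
    - Q ((i : ℕ) / 2^n) (((j : ℕ) + 1) / 2^n)
    - Q (((i : ℕ) + 1) / 2^n) ((j : ℕ) / 2^n)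
    + Q ((i : ℕ) / 2^n) ((j : ℕ) / 2^n)

/-- The set of all row/column sums of positive parts of dyadic volumes, normalized by
strip width; α_Q is its supremum. -/
noncomputable def alphaSet (Q : ℝ → ℝ → ℝ) : Set ℝ :=
  {r | ∃ n : ℕ, 1 ≤ n ∧
    ((∃ i : Fin (2^n), r = 2^n * ∑ j : Fin (2^n), max (dyadVol Q n i j) 0) ∨
     (∃ j : Fin (2^n), r = 2^n * ∑ i : Fin (2^n), max (dyadVol Q n i j) 0))}

lemma isCopula_combo {C D : ℝ → ℝ → ℝ} {a b : ℝ} (hC : IsCopula C) (hD : IsCopula D)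
    (ha : 0 ≤ a) (hb : 0 ≤ b) (hab : a + b = 1) :
    IsCopula (fun x y => a * C x y + b * D x y) := by
  constructor
  · intro x hx
    obtain ⟨h1, h2, h3, h4⟩ := hC.1 x hx
    obtain ⟨g1, g2, g3, g4⟩ := hD.1 x hx
    simp only [h1, h2, h3, h4, g1, g2, g3, g4]
    refine ⟨by ring, by ring, by rw [← add_mul, hab, one_mul], by rw [← add_mul, hab, one_mul]⟩
  · intro x₁ hx₁ x₂ hx₂ y₁ hy₁ y₂ hy₂ hx hy
    have h1 := hC.2 x₁ hx₁ x₂ hx₂ y₁ hy₁ y₂ hy₂ hx hy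
    have h2 := hD.2 x₁ hx₁ x₂ hx₂ y₁ hy₁ y₂ hy₂ hx hy
    simp only
    nlinarith

theorem stmt19 (Q C₁ C₂ : ℝ → ℝ → ℝ) (α₁ α₂ : ℝ)
    (hQ : IsQuasiCopula Q) (hproper : ¬ IsCopula Q)
    (hC₁ : IsCopula C₁) (hC₂ : IsCopula C₂)
    (hsum : α₁ + α₂ = 1)
    (hrep : ∀ x ∈ Icc (0:ℝ) 1, ∀ y ∈ Icc (0:ℝ) 1,
      Q x y = α₁ * C₁ x y + α₂ * C₂ x y) :
    ((α₁ < 0 ∧ 0 ≤ α₂) ∨ (α₂ < 0 ∧ 0 ≤ α₁)) ∧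
    (α₂ < 0 → ∀ (C₃ : ℝ → ℝ → ℝ) (α₃ : ℝ), IsCopula C₃ → 0 < α₃ →
      ∃ C₁' C₂' : ℝ → ℝ → ℝ, IsCopula C₁' ∧ IsCopula C₂' ∧
        (∀ x ∈ Icc (0:ℝ) 1, ∀ y ∈ Icc (0:ℝ) 1,
          Q x y = (α₁ + α₃) * C₁' x y + (α₂ - α₃) * C₂' x y) ∧
        |α₁| + |α₂| < |α₁ + α₃| + |α₂ - α₃|) := by
  have key : ¬ (0 ≤ α₁ ∧ 0 ≤ α₂) := by
    rintro ⟨h1, h2⟩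
    apply hproper
    refine ⟨hQ.1, ?_⟩
    intro x₁ hx₁ x₂ hx₂ y₁ hy₁ y₂ hy₂ hx hy
    rw [hrep x₁ hx₁ y₁ hy₁, hrep x₁ hx₁ y₂ hy₂, hrep x₂ hx₂ y₁ hy₁, hrep x₂ hx₂ y₂ hy₂]
    have g1 := hC₁.2 x₁ hx₁ x₂ hx₂ y₁ hy₁ y₂ hy₂ hx hy
    have g2 := hC₂.2 x₁ hx₁ x₂ hx₂ y₁ hy₁ y₂ hy₂ hx hy
    nlinarith
  constructor
  · by_cases h : 0 ≤ α₁
    · right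
      refine ⟨?_, h⟩
      by_contra h2
      push_neg at h2
      exact key ⟨h, h2⟩
    · left
      push_neg at h
      exact ⟨h, by linarith⟩
  · intro hα₂ C₃ α₃ hC₃ hα₃
    have hα₁ : 0 < α₁ := by linarith
    have hden1 : 0 < α₁ + α₃ := by linarith
    have hden2 : α₂ - α₃ < 0 := by linarith
    have ha : 0 ≤ α₁ / (α₁ + α₃) := div_nonneg hα₁.le hden1.le
    have hb : 0 ≤ α₃ / (α₁ + α₃) := div_nonneg hα₃.le hden1.le
    have hab : α₁ / (α₁ + α₃) + α₃ / (α₁ + α₃) = 1 := by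
      rw [← add_div, div_self hden1.ne']
    have hc : 0 ≤ α₂ / (α₂ - α₃) := by
      rw [div_nonneg_iff]; right; exact ⟨by linarith, hden2.le⟩
    have hd : 0 ≤ (-α₃) / (α₂ - α₃) := by
      rw [div_nonneg_iff]; right; exact ⟨by linarith, hden2.le⟩
    have hcd : α₂ / (α₂ - α₃) + (-α₃) / (α₂ - α₃) = 1 := by
      rw [← add_div, div_eq_one_iff_eq hden2.ne]; ring
    refine ⟨fun x y => (α₁ / (α₁ + α₃)) * C₁ x y + (α₃ / (α₁ + α₃)) * C₃ x y,
      fun x y => (α₂ / (α₂ - α₃)) * C₂ x y + ((-α₃) / (α₂ - α₃)) * C₃ x y,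
      isCopula_combo hC₁ hC₃ ha hb hab, isCopula_combo hC₂ hC₃ hc hd hcd, ?_, ?_⟩
    · intro x hx y hy
      rw [hrep x hx y hy]
      field_simp [hden1.ne', hden2.ne]
      ring
    · rw [abs_of_pos hα₁, abs_of_neg hα₂, abs_of_pos hden1, abs_of_neg hden2]
      linarith
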